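/- Let G₁ = N(μ₁,Σ₁) and G₂ = N(μ₂,Σ₂) be Gaussians on R^d with χ^{-1}·I ≤ Σ_j ≤ χ·I for j = 1,2. If d_TV(G₁,G₂) ≤ 1 − ε for some 0 < ε < 0.1, then ‖μ₁ − μ₂‖ ≤ C·√(χ·log(1/ε)) for a universal constant C. -/

import Mathlib

open MeasureTheory

/-- Density of the Gaussian `N(μ, A)` on `ℝ^d` at `z`. -/
noncomputable def gaussDensity {d : ℕ} (μ : Fin d → ℝ) (A : Matrix (Fin d) (Fin d) ℝ)
    (z : Fin d → ℝ) : ℝ :=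
  (Real.sqrt ((2 * Real.pi) ^ d * A.det))⁻¹ *
    Real.exp (-(dotProduct (z - μ) (A⁻¹.mulVec (z - μ))) / 2)

/-- The Gaussian measure `N(μ, A)` on `ℝ^d`. -/
noncomputable def gaussMeasure {d : ℕ} (μ : Fin d → ℝ)
    (A : Matrix (Fin d) (Fin d) ℝ) : Measure (Fin d → ℝ) :=
  volume.withDensity (fun z => ENNReal.ofReal (gaussDensity μ A z))

/-- Total variation distance between two measures. -/
noncomputable def tvDist {α : Type*} [MeasurableSpace α] (P Q : Measure α) : ℝ :=
  ⨆ s : {s : Set α // MeasurableSet s}, |(P s).toReal - (Q s).toReal|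

/-- Frobenius norm of a matrix. -/
noncomputable def frobNorm {d : ℕ} (M : Matrix (Fin d) (Fin d) ℝ) : ℝ :=
  Real.sqrt (∑ i, ∑ j, (M i j)^2)

open Matrix Real Complex
open scoped ENNReal NNReal

lemma contin_dot {d : ℕ} (w : Fin d → ℝ) : Continuous (fun u : Fin d → ℝ => w ⬝ᵥ u) := by
  unfold dotProduct
  exact continuous_finset_sum _ fun i _ => (continuous_const.mul (continuous_apply i))

lemma exponent_eq {d : ℕ} (c : Fin d → ℝ) (y : Fin d → ℝ) :
    (- ∑ i, (1/2 : ℂ) * (y i : ℂ) ^ 2 + ∑ i, (c i : ℂ) * y i)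
      = ((-(y ⬝ᵥ y)/2 + c ⬝ᵥ y : ℝ) : ℂ) := by
  simp only [dotProduct]
  push_cast
  ring_nf
  rw [add_comm]
  congr 1
  rw [Finset.sum_mul, ← Finset.sum_neg_distrib]
  exact Finset.sum_congr rfl fun i _ => by ring

lemma integrable_base {d : ℕ} (c : Fin d → ℝ) :
    Integrable (fun y : Fin d → ℝ => rexp (-(y ⬝ᵥ y)/2 + c ⬝ᵥ y)) := by
  have h2 := (GaussianFourier.integrable_cexp_neg_sum_mul_add (ι := Fin d)
    (b := fun _ => (1/2 : ℂ)) (fun i => by norm_num) (fun i => (c i : ℂ))).norm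
  convert h2 using 2 with y
  rw [exponent_eq, ← Complex.ofReal_exp, Complex.norm_real, Real.norm_eq_abs,
    abs_of_pos (Real.exp_pos _)]


lemma sqrt_two_pi_pow (d : ℕ) : Real.sqrt ((2*π)^d) = Real.sqrt (2*π) ^ d := by
  rw [show ((2*π)^d : ℝ) = (Real.sqrt (2*π)^2)^d by rw [Real.sq_sqrt (by positivity)],
    ← pow_mul, mul_comm 2 d, pow_mul, Real.sqrt_sq (by positivity)]

lemma integral_base {d : ℕ} (c : Fin d → ℝ) :
    ∫ y : Fin d → ℝ, rexp (-(y ⬝ᵥ y)/2 + c ⬝ᵥ y)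
      = Real.sqrt ((2*π)^d) * rexp ((c ⬝ᵥ c)/2) := by
  have key := GaussianFourier.integral_cexp_neg_sum_mul_add (ι := Fin d)
    (b := fun _ => (1/2 : ℂ)) (fun i => by norm_num) (fun i => (c i : ℂ))
  have hL : ∫ v : Fin d → ℝ, cexp (- ∑ i, (1/2:ℂ) * (v i : ℂ) ^ 2 + ∑ i, ((c i : ℂ)) * v i)
      = ((∫ y : Fin d → ℝ, rexp (-(y ⬝ᵥ y)/2 + c ⬝ᵥ y) : ℝ) : ℂ) := by
    simp_rw [exponent_eq c, ← Complex.ofReal_exp]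
    exact integral_ofReal
  have h1 : ((π : ℂ) / ((1:ℂ)/2)) ^ ((1:ℂ) / 2) = ((Real.sqrt (2*π) : ℝ) : ℂ) := by
    have e : ((π : ℂ) / ((1:ℂ)/2)) = ((2*π : ℝ) : ℂ) := by push_cast; ring
    rw [e, Real.sqrt_eq_rpow, Complex.ofReal_cpow (by positivity)]
    norm_num
  have h2 : ∀ i : Fin d, cexp ((c i : ℂ) ^ 2 / (4 * (1/2))) = ((rexp (c i ^ 2 / 2) : ℝ) : ℂ) := by
    intro i
    rw [show ((c i : ℂ)^2/(4*(1/2))) = ((c i^2/2 : ℝ) : ℂ) by push_cast; ring,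
      ← Complex.ofReal_exp]
  have hR : (∏ i : Fin d, ((π : ℂ) / ((1:ℂ)/2)) ^ ((1:ℂ) / 2) * cexp ((c i : ℂ) ^ 2 / (4 * (1/2))))
      = ((Real.sqrt ((2*π)^d) * rexp ((c ⬝ᵥ c)/2) : ℝ) : ℂ) := by
    simp_rw [h1, h2, ← Complex.ofReal_mul, ← Complex.ofReal_prod]
    rw [Finset.prod_mul_distrib, Finset.prod_const, ← Real.exp_sum, sqrt_two_pi_pow]
    exact congrArg Complex.ofReal (by
      rw [Finset.card_univ, Fintype.card_fin]
      congr 1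
      rw [dotProduct, Finset.sum_div]
      exact Real.exp_eq_exp.mpr (Finset.sum_congr rfl fun i _ => by ring))
  rw [hL, hR] at key
  exact_mod_cast key

lemma dot_symm {d : ℕ} {B : Matrix (Fin d) (Fin d) ℝ} (hB : B.IsHermitian)
    (x y : Fin d → ℝ) : (B *ᵥ x) ⬝ᵥ y = x ⬝ᵥ (B *ᵥ y) := by
  have hBt : Bᵀ = B := by
    have := hB.eq
    rwa [Matrix.conjTranspose_eq_transpose_of_trivial] at this
  calc (B *ᵥ x) ⬝ᵥ y = (x ᵥ* B) ⬝ᵥ y := by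
        conv_lhs => rw [← hBt, Matrix.mulVec_transpose]
    _ = x ⬝ᵥ (B *ᵥ y) := (Matrix.dotProduct_mulVec x B y).symm

open scoped MatrixOrder in
lemma gauss_mgf {d : ℕ} {A : Matrix (Fin d) (Fin d) ℝ} (hA : A.PosDef) (μ w : Fin d → ℝ) :
    ∫⁻ z, ENNReal.ofReal (rexp (w ⬝ᵥ (z - μ)) * gaussDensity μ A z)
      = ENNReal.ofReal (rexp ((w ⬝ᵥ (A *ᵥ w))/2)) := by
  classical
  set B := CFC.sqrt A with hBdef
  have hBB : B * B = A := CFC.sqrt_mul_sqrt_self A (Matrix.nonneg_iff_posSemidef.mpr hA.posSemidef)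
  have hBH : B.IsHermitian := (Matrix.nonneg_iff_posSemidef.mp (CFC.sqrt_nonneg A)).1
  have hdetA : 0 < A.det := hA.det_pos
  have hdetB2 : B.det * B.det = A.det := by rw [← Matrix.det_mul, hBB]
  have hdetBne : B.det ≠ 0 := by
    intro h
    rw [h, zero_mul] at hdetB2
    exact hdetA.ne' hdetB2.symm
  have habs : |B.det| = Real.sqrt A.det := by
    rw [← hdetB2, ← sq, Real.sqrt_sq_eq_abs]
  have hBinv : B * B⁻¹ = 1 := Matrix.mul_nonsing_inv B (Ne.isUnit hdetBne)
  have hAinv : A⁻¹ = B⁻¹ * B⁻¹ := by rw [← hBB, Matrix.mul_inv_rev]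
  set c : ℝ := Real.sqrt ((2*π)^d * A.det) with hcdef
  have hc : 0 < c := Real.sqrt_pos.mpr (by positivity)
  set G : (Fin d → ℝ) → ℝ :=
    fun u => rexp (w ⬝ᵥ u) * (c⁻¹ * rexp (-(u ⬝ᵥ (A⁻¹ *ᵥ u))/2)) with hGdef
  have hGcont : Continuous G := by
    apply Continuous.mul
    · exact Real.continuous_exp.comp (contin_dot w)
    · apply continuous_const.mul
      apply Real.continuous_exp.comp
      apply Continuous.div_const
      apply Continuous.neg
      have : Continuous fun u : Fin d → ℝ => A⁻¹ *ᵥ u := by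
        apply continuous_pi
        intro i
        exact contin_dot _
      exact continuous_finset_sum _ fun i _ =>
        (continuous_apply i).mul ((continuous_apply i).comp this)
  have hGmeas : Measurable fun u => ENNReal.ofReal (G u) := hGcont.measurable.ennreal_ofReal
  have step1 : ∫⁻ z, ENNReal.ofReal (rexp (w ⬝ᵥ (z - μ)) * gaussDensity μ A z)
      = ∫⁻ u, ENNReal.ofReal (G u) := by
    have he : ∀ z, rexp (w ⬝ᵥ (z - μ)) * gaussDensity μ A z = G (z - μ) := fun z => rfl
    simp_rw [he, sub_eq_add_neg]
    exact lintegral_add_right_eq_self (fun u => ENNReal.ofReal (G u)) (-μ)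
  have step2 : ∫⁻ u, ENNReal.ofReal (G u)
      = ENNReal.ofReal |B.det| * ∫⁻ y, ENNReal.ofReal (G (B *ᵥ y)) := by
    have hmap := Real.map_matrix_volume_pi_eq_smul_volume_pi (M := B) hdetBne
    have hTmeas : Measurable (Matrix.toLin' B) :=
      (Matrix.toLin' B).continuous_of_finiteDimensional.measurable
    have h1 : ∫⁻ y, ENNReal.ofReal (G (B *ᵥ y))
        = ∫⁻ u, ENNReal.ofReal (G u) ∂(Measure.map (Matrix.toLin' B) volume) := by
      rw [lintegral_map hGmeas hTmeas]
      simp_rw [Matrix.toLin'_apply]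
    rw [h1, hmap, lintegral_smul_measure, smul_eq_mul, ← mul_assoc,
      ← ENNReal.ofReal_mul (abs_nonneg _), ← abs_mul, mul_inv_cancel₀ hdetBne]
    simp
  have h2 : B⁻¹ * B = 1 := Matrix.nonsing_inv_mul B (Ne.isUnit hdetBne)
  have hq : ∀ y : Fin d → ℝ, (B *ᵥ y) ⬝ᵥ (A⁻¹ *ᵥ (B *ᵥ y)) = y ⬝ᵥ y := by
    intro y
    rw [dot_symm hBH, Matrix.mulVec_mulVec, Matrix.mulVec_mulVec]
    have he : B * A⁻¹ * B = 1 := by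
      rw [hAinv, ← Matrix.mul_assoc B B⁻¹ B⁻¹, hBinv, Matrix.one_mul, h2]
    rw [he, Matrix.one_mulVec]
  have hw : (B *ᵥ w) ⬝ᵥ (B *ᵥ w) = w ⬝ᵥ (A *ᵥ w) := by
    rw [dot_symm hBH, Matrix.mulVec_mulVec, hBB]
  have step3 : ∀ y : Fin d → ℝ,
      G (B *ᵥ y) = c⁻¹ * rexp (-(y ⬝ᵥ y)/2 + (B *ᵥ w) ⬝ᵥ y) := by
    intro y
    have hl : w ⬝ᵥ (B *ᵥ y) = (B *ᵥ w) ⬝ᵥ y := (dot_symm hBH w y).symm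
    simp only [hGdef, hq, hl, Real.exp_add]
    ring
  have step4 : ∫⁻ y, ENNReal.ofReal (G (B *ᵥ y))
      = ENNReal.ofReal (c⁻¹ * (Real.sqrt ((2*π)^d) * rexp ((w ⬝ᵥ (A *ᵥ w))/2))) := by
    simp_rw [step3]
    simp_rw [ENNReal.ofReal_mul (le_of_lt (inv_pos.mpr hc))]
    rw [lintegral_const_mul' _ _ ENNReal.ofReal_ne_top,
      ← ofReal_integral_eq_lintegral_ofReal (integrable_base _)
        (Filter.Eventually.of_forall fun y => le_of_lt (Real.exp_pos _)),
      integral_base, hw, ← ENNReal.ofReal_mul (le_of_lt (inv_pos.mpr hc))]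
  rw [step1, step2, step4, ← ENNReal.ofReal_mul (abs_nonneg _)]
  congr 1
  have hcval : c = Real.sqrt ((2*π)^d) * Real.sqrt A.det := by
    rw [hcdef, Real.sqrt_mul (by positivity)]
  have hs : (0:ℝ) < Real.sqrt ((2*π)^d) := Real.sqrt_pos.mpr (by positivity)
  have hsd : (0:ℝ) < Real.sqrt A.det := Real.sqrt_pos.mpr hdetA
  rw [habs, hcval]
  field_simp

lemma gauss_total {d : ℕ} {A : Matrix (Fin d) (Fin d) ℝ} (hA : A.PosDef) (μ : Fin d → ℝ) :
    gaussMeasure μ A Set.univ = 1 := by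
  rw [gaussMeasure, withDensity_apply _ MeasurableSet.univ, Measure.restrict_univ]
  have h := gauss_mgf hA μ 0
  simp only [zero_dotProduct, Real.exp_zero, one_mul, Matrix.mulVec_zero,
    zero_div, ENNReal.ofReal_one] at h
  exact h

lemma measurableSet_halfspace {d : ℕ} (w μ : Fin d → ℝ) (t : ℝ) :
    MeasurableSet {z : Fin d → ℝ | t ≤ w ⬝ᵥ (z - μ)} := by
  have hc : Continuous fun z : Fin d → ℝ => w ⬝ᵥ (z - μ) :=
    (contin_dot w).comp (continuous_id.sub continuous_const)
  exact measurableSet_le measurable_const hc.measurable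

lemma gauss_chernoff {d : ℕ} {A : Matrix (Fin d) (Fin d) ℝ} (hA : A.PosDef)
    (μ w : Fin d → ℝ) {χ t : ℝ} (hχ : 0 < χ) (hw : w ⬝ᵥ (A *ᵥ w) ≤ χ) (ht : 0 ≤ t) :
    gaussMeasure μ A {z | t ≤ w ⬝ᵥ (z - μ)} ≤ ENNReal.ofReal (rexp (-(t^2)/(2*χ))) := by
  set l := t/χ with hldef
  have hl : 0 ≤ l := div_nonneg ht hχ.le
  have hS := measurableSet_halfspace w μ t
  rw [gaussMeasure, withDensity_apply _ hS]
  have hσnn : 0 ≤ w ⬝ᵥ (A *ᵥ w) := by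
    have := hA.posSemidef.dotProduct_mulVec_nonneg w
    rwa [star_trivial] at this
  have key : ∫⁻ z in {z | t ≤ w ⬝ᵥ (z - μ)}, ENNReal.ofReal (gaussDensity μ A z)
      ≤ ∫⁻ z, ENNReal.ofReal (rexp (-(l*t)) * (rexp ((l • w) ⬝ᵥ (z - μ)) * gaussDensity μ A z)) := by
    refine le_trans (setLIntegral_mono ?_ ?_) (setLIntegral_le_lintegral _ _)
    · have hc : Continuous fun z : Fin d → ℝ =>
          rexp (-(l*t)) * (rexp ((l • w) ⬝ᵥ (z - μ)) * gaussDensity μ A z) := by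
        apply continuous_const.mul
        apply Continuous.mul
        · exact Real.continuous_exp.comp
            ((contin_dot (l • w)).comp (continuous_id.sub continuous_const))
        · unfold gaussDensity
          apply continuous_const.mul
          apply Real.continuous_exp.comp
          apply Continuous.div_const
          apply Continuous.neg
          have hmv : Continuous fun z : Fin d → ℝ => A⁻¹ *ᵥ (z - μ) := by
            apply continuous_pi
            intro i
            exact (contin_dot _).comp (continuous_id.sub continuous_const)
          unfold dotProduct
          exact continuous_finset_sum _ fun i _ =>
            (((continuous_apply i).comp (continuous_id.sub continuous_const)).mul
              ((continuous_apply i).comp hmv))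
      exact (hc.measurable).ennreal_ofReal
    · intro z hz
      apply ENNReal.ofReal_le_ofReal
      have h1 : (1:ℝ) ≤ rexp (-(l*t)) * rexp ((l • w) ⬝ᵥ (z - μ)) := by
        rw [← Real.exp_add]
        apply Real.one_le_exp
        rw [smul_dotProduct]
        have : t ≤ w ⬝ᵥ (z - μ) := hz
        have := mul_le_mul_of_nonneg_left this hl
        simp only [smul_eq_mul]
        nlinarith
      have hgd : 0 ≤ gaussDensity μ A z := by
        unfold gaussDensity
        positivity
      calc gaussDensity μ A z = 1 * gaussDensity μ A z := (one_mul _).symm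
        _ ≤ (rexp (-(l*t)) * rexp ((l • w) ⬝ᵥ (z - μ))) * gaussDensity μ A z :=
            mul_le_mul_of_nonneg_right h1 hgd
        _ = rexp (-(l*t)) * (rexp ((l • w) ⬝ᵥ (z - μ)) * gaussDensity μ A z) := by ring
  refine le_trans key ?_
  have hrw : ∀ z : Fin d → ℝ,
      ENNReal.ofReal (rexp (-(l*t)) * (rexp ((l • w) ⬝ᵥ (z - μ)) * gaussDensity μ A z))
        = ENNReal.ofReal (rexp (-(l*t))) * ENNReal.ofReal (rexp ((l • w) ⬝ᵥ (z - μ)) * gaussDensity μ A z) :=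
    fun z => ENNReal.ofReal_mul (Real.exp_pos _).le
  simp_rw [hrw]
  rw [lintegral_const_mul' _ _ ENNReal.ofReal_ne_top, gauss_mgf hA μ (l • w),
    ← ENNReal.ofReal_mul (Real.exp_pos _).le, ← Real.exp_add]
  apply ENNReal.ofReal_le_ofReal
  apply Real.exp_le_exp.mpr
  have hsm : (l • w) ⬝ᵥ (A *ᵥ (l • w)) = l^2 * (w ⬝ᵥ (A *ᵥ w)) := by
    rw [smul_dotProduct, Matrix.mulVec_smul, dotProduct_smul]
    simp only [smul_eq_mul]
    ring
  rw [hsm]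
  have h1 : l^2 * (w ⬝ᵥ (A *ᵥ w)) ≤ l^2 * χ := by
    apply mul_le_mul_of_nonneg_left hw (sq_nonneg l)
  have hl2 : l^2 * χ = t^2/χ := by
    rw [hldef]
    field_simp
  have hfin : -(l*t) + (l^2*χ)/2 = -t^2/(2*χ) := by
    rw [hldef]
    field_simp
    ring
  linarith

lemma dot_self_nonneg {d : ℕ} (x : Fin d → ℝ) : 0 ≤ x ⬝ᵥ x :=
  Finset.sum_nonneg fun i _ => mul_self_nonneg _

lemma dot_self_pos {d : ℕ} {x : Fin d → ℝ} (hx : x ≠ 0) : 0 < x ⬝ᵥ x := by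
  rcases (dot_self_nonneg x).lt_or_eq with h | h
  · exact h
  · exact absurd (dotProduct_self_eq_zero.mp h.symm) hx

lemma lower_expand {d : ℕ} {S : Matrix (Fin d) (Fin d) ℝ} {χ : ℝ}
    (h : (S - χ⁻¹ • 1).PosSemidef) (x : Fin d → ℝ) :
    χ⁻¹ * (x ⬝ᵥ x) ≤ x ⬝ᵥ (S *ᵥ x) := by
  have h2 := h.dotProduct_mulVec_nonneg x
  rw [star_trivial, Matrix.sub_mulVec, Matrix.smul_mulVec, Matrix.one_mulVec,
    dotProduct_sub, dotProduct_smul, smul_eq_mul] at h2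
  linarith

lemma upper_expand {d : ℕ} {S : Matrix (Fin d) (Fin d) ℝ} {χ : ℝ}
    (h : (χ • 1 - S).PosSemidef) (x : Fin d → ℝ) :
    x ⬝ᵥ (S *ᵥ x) ≤ χ * (x ⬝ᵥ x) := by
  have h2 := h.dotProduct_mulVec_nonneg x
  rw [star_trivial, Matrix.sub_mulVec, Matrix.smul_mulVec, Matrix.one_mulVec,
    dotProduct_sub, dotProduct_smul, smul_eq_mul] at h2
  linarith

lemma posdef_of_lower {d : ℕ} {S : Matrix (Fin d) (Fin d) ℝ} {χ : ℝ} (hχ : 0 < χ)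
    (h : (S - χ⁻¹ • 1).PosSemidef) : S.PosDef := by
  refine Matrix.PosDef.of_dotProduct_mulVec_pos ?_ ?_
  · have h1 : (S - χ⁻¹ • 1)ᴴ = S - χ⁻¹ • 1 := h.1
    rw [Matrix.conjTranspose_sub, Matrix.conjTranspose_smul, Matrix.conjTranspose_one,
      star_trivial] at h1
    exact sub_left_injective h1
  · intro x hx
    rw [star_trivial]
    calc (0:ℝ) < χ⁻¹ * (x ⬝ᵥ x) := mul_pos (inv_pos.mpr hχ) (dot_self_pos hx)
      _ ≤ x ⬝ᵥ (S *ᵥ x) := lower_expand h x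

/-- There is a universal constant `C` such that for `χ`-balanced Gaussians
(`χ⁻¹·I ⪯ Σ_j ⪯ χ·I`), if `d_TV(G₁,G₂) ≤ 1 − ε` with `0 < ε < 0.1`, then
`‖μ₁ − μ₂‖ ≤ C·√(χ·log(1/ε))`. -/
theorem balanced_gaussian_mean_separation :
    ∃ C : ℝ, 0 < C ∧ ∀ (d : ℕ) (μ₁ μ₂ : Fin d → ℝ)
      (S₁ S₂ : Matrix (Fin d) (Fin d) ℝ) (χ ε : ℝ),
      0 < χ →
      (S₁ - χ⁻¹ • 1).PosSemidef → (χ • 1 - S₁).PosSemidef →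
      (S₂ - χ⁻¹ • 1).PosSemidef → (χ • 1 - S₂).PosSemidef →
      0 < ε → ε < 0.1 →
      tvDist (gaussMeasure μ₁ S₁) (gaussMeasure μ₂ S₂) ≤ 1 - ε →
      Real.sqrt (dotProduct (μ₁ - μ₂) (μ₁ - μ₂)) ≤
        C * Real.sqrt (χ * Real.log (1/ε)) := by
  refine ⟨4, by norm_num, ?_⟩
  intro d μ₁ μ₂ S₁ S₂ χ ε hχ h11 h12 h21 h22 hε hε01 htv
  by_contra hcon
  push_neg at hcon
  have hε01' : ε < 1/10 := by norm_num at hε01 ⊢; exact hε01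
  have hPD₁ := posdef_of_lower hχ h11
  have hPD₂ := posdef_of_lower hχ h21
  set D := μ₂ - μ₁ with hDdef
  have hDD : (μ₁ - μ₂) ⬝ᵥ (μ₁ - μ₂) = D ⬝ᵥ D := by
    have hneg : μ₁ - μ₂ = -D := by rw [hDdef, neg_sub]
    rw [hneg, neg_dotProduct, dotProduct_neg, neg_neg]
  rw [hDD] at hcon
  set n := Real.sqrt (D ⬝ᵥ D) with hndef
  have hRHSnn : (0:ℝ) ≤ 4 * Real.sqrt (χ * Real.log (1/ε)) := by positivity
  have hn0 : 0 < n := lt_of_le_of_lt hRHSnn hcon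
  have hn2 : D ⬝ᵥ D = n^2 := (Real.sq_sqrt (dot_self_nonneg D)).symm
  set w := n⁻¹ • D with hwdef
  have hww : w ⬝ᵥ w = 1 := by
    rw [hwdef, smul_dotProduct, dotProduct_smul, smul_eq_mul, smul_eq_mul, hn2]
    field_simp
  have hwD : w ⬝ᵥ D = n := by
    rw [hwdef, smul_dotProduct, smul_eq_mul, hn2, sq, ← mul_assoc,
      inv_mul_cancel₀ (ne_of_gt hn0), one_mul]
  have hσ₁ : w ⬝ᵥ (S₁ *ᵥ w) ≤ χ := by
    have := upper_expand h12 w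
    rwa [hww, mul_one] at this
  have hσ₂' : (-w) ⬝ᵥ (S₂ *ᵥ (-w)) ≤ χ := by
    rw [neg_dotProduct, Matrix.mulVec_neg, dotProduct_neg, neg_neg]
    have := upper_expand h22 w
    rwa [hww, mul_one] at this
  have hlog2 : 0 < Real.log (2/ε) := Real.log_pos (by rw [lt_div_iff₀ hε]; linarith)
  have hlog1 : 0 < Real.log (1/ε) := Real.log_pos (by rw [lt_div_iff₀ hε]; linarith)
  set s := Real.sqrt (2*χ*Real.log (2/ε)) with hsdef
  have hs0 : 0 < s := Real.sqrt_pos.mpr (by positivity)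
  have hs2 : s^2 = 2*χ*Real.log (2/ε) := Real.sq_sqrt (by positivity)
  have hexp_s : rexp (-(s^2)/(2*χ)) = ε/2 := by
    have hdiv : (2*χ)*Real.log (2/ε)/(2*χ) = Real.log (2/ε) :=
      mul_div_cancel_left₀ _ (by positivity)
    rw [hs2, show (2:ℝ)*χ*Real.log (2/ε) = (2*χ)*Real.log (2/ε) by ring, neg_div, hdiv,
      Real.exp_neg, Real.exp_log (by positivity), inv_div]
  have hsle : 2*s ≤ 4 * Real.sqrt (χ * Real.log (1/ε)) := by
    have hlelog : Real.log (2/ε) ≤ 2 * Real.log (1/ε) := by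
      rw [show (2:ℝ)/ε = 2 * (1/ε) by ring,
        Real.log_mul (by norm_num) (by positivity)]
      have h2 : Real.log 2 ≤ Real.log (1/ε) :=
        Real.log_le_log (by norm_num) (by rw [le_div_iff₀ hε]; linarith)
      linarith
    have hle : 2*χ*Real.log (2/ε) ≤ 4*(χ*Real.log (1/ε)) := by nlinarith
    have hkey : s ≤ 2 * Real.sqrt (χ*Real.log (1/ε)) := by
      rw [hsdef]
      have h4 : (2:ℝ) * Real.sqrt (χ*Real.log (1/ε)) = Real.sqrt (4*(χ*Real.log (1/ε))) := by
        rw [show (4:ℝ)*(χ*Real.log (1/ε)) = (2:ℝ)^2*(χ*Real.log (1/ε)) by norm_num,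
          Real.sqrt_mul (show (0:ℝ) ≤ (2:ℝ)^2 by norm_num) (χ*Real.log (1/ε)),
          Real.sqrt_sq (show (0:ℝ) ≤ 2 by norm_num)]
      rw [h4]
      exact Real.sqrt_le_sqrt hle
    linarith
  have hns : 2*s < n := lt_of_le_of_lt hsle hcon
  set E := {z : Fin d → ℝ | s ≤ w ⬝ᵥ (z - μ₁)} with hEdef
  have hEm : MeasurableSet E := measurableSet_halfspace w μ₁ s
  have hE1 : gaussMeasure μ₁ S₁ E ≤ ENNReal.ofReal (ε/2) := by
    have := gauss_chernoff hPD₁ μ₁ w hχ hσ₁ hs0.le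
    rwa [hexp_s] at this
  set t₀ := n - s with ht₀def
  have hst₀ : s < t₀ := by rw [ht₀def]; linarith
  have hsub : Eᶜ ⊆ {z : Fin d → ℝ | t₀ ≤ (-w) ⬝ᵥ (z - μ₂)} := by
    intro z hz
    simp only [Set.mem_compl_iff, hEdef, Set.mem_setOf_eq, not_le] at hz
    simp only [Set.mem_setOf_eq]
    have hz2 : z - μ₂ = (z - μ₁) - D := by rw [hDdef]; abel
    rw [hz2, neg_dotProduct, dotProduct_sub, hwD]
    rw [ht₀def]
    linarith
  have hE2 : gaussMeasure μ₂ S₂ Eᶜ ≤ ENNReal.ofReal (rexp (-(t₀^2)/(2*χ))) :=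
    le_trans (measure_mono hsub)
      (gauss_chernoff hPD₂ μ₂ (-w) hχ hσ₂' (by rw [ht₀def]; linarith))
  have hτlt : rexp (-(t₀^2)/(2*χ)) < ε/2 := by
    rw [← hexp_s]
    apply Real.exp_lt_exp.mpr
    have h2χ : (0:ℝ) < 2*χ := by linarith
    rw [div_lt_div_iff₀ h2χ h2χ]
    have hsq : s^2 < t₀^2 := by nlinarith [hst₀, hs0]
    nlinarith [hsq, h2χ]
  have hP₁u : gaussMeasure μ₁ S₁ Set.univ = 1 := gauss_total hPD₁ μ₁
  have hP₂u : gaussMeasure μ₂ S₂ Set.univ = 1 := gauss_total hPD₂ μ₂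
  have hle1 : gaussMeasure μ₁ S₁ E ≤ 1 := by
    rw [← hP₁u]; exact measure_mono (Set.subset_univ E)
  have hP₁Efin : gaussMeasure μ₁ S₁ E ≠ ⊤ :=
    ne_top_of_le_ne_top ENNReal.one_ne_top hle1
  have ha : 1 - ε/2 ≤ (gaussMeasure μ₁ S₁ Eᶜ).toReal := by
    have hcompl : gaussMeasure μ₁ S₁ Eᶜ = 1 - gaussMeasure μ₁ S₁ E := by
      rw [measure_compl hEm hP₁Efin, hP₁u]
    rw [hcompl, ENNReal.toReal_sub_of_le hle1 ENNReal.one_ne_top, ENNReal.toReal_one]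
    have : (gaussMeasure μ₁ S₁ E).toReal ≤ ε/2 :=
      ENNReal.toReal_le_of_le_ofReal (by linarith) hE1
    linarith
  have hb : (gaussMeasure μ₂ S₂ Eᶜ).toReal < ε/2 :=
    lt_of_le_of_lt (ENNReal.toReal_le_of_le_ofReal (Real.exp_pos _).le hE2) hτlt
  have hbdd : BddAbove (Set.range fun S : {s : Set (Fin d → ℝ) // MeasurableSet s} =>
      |(gaussMeasure μ₁ S₁ S).toReal - (gaussMeasure μ₂ S₂ S).toReal|) := by
    refine ⟨2, ?_⟩
    rintro x ⟨S, rfl⟩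
    show |(gaussMeasure μ₁ S₁ ↑S).toReal - (gaussMeasure μ₂ S₂ ↑S).toReal| ≤ 2
    have h1 : (gaussMeasure μ₁ S₁ S).toReal ≤ 1 := by
      have hle : gaussMeasure μ₁ S₁ S ≤ 1 := by
        rw [← hP₁u]; exact measure_mono (Set.subset_univ _)
      calc (gaussMeasure μ₁ S₁ S).toReal ≤ (1:ℝ≥0∞).toReal :=
            ENNReal.toReal_mono ENNReal.one_ne_top hle
        _ = 1 := ENNReal.toReal_one
    have h2 : (gaussMeasure μ₂ S₂ S).toReal ≤ 1 := by
      have hle : gaussMeasure μ₂ S₂ S ≤ 1 := by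
        rw [← hP₂u]; exact measure_mono (Set.subset_univ _)
      calc (gaussMeasure μ₂ S₂ S).toReal ≤ (1:ℝ≥0∞).toReal :=
            ENNReal.toReal_mono ENNReal.one_ne_top hle
        _ = 1 := ENNReal.toReal_one
    have h3 := ENNReal.toReal_nonneg (a := gaussMeasure μ₁ S₁ S)
    have h4 := ENNReal.toReal_nonneg (a := gaussMeasure μ₂ S₂ S)
    rw [abs_sub_le_iff]
    constructor <;> linarith
  have hlb : |(gaussMeasure μ₁ S₁ Eᶜ).toReal - (gaussMeasure μ₂ S₂ Eᶜ).toReal|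
      ≤ tvDist (gaussMeasure μ₁ S₁) (gaussMeasure μ₂ S₂) :=
    le_ciSup hbdd (⟨Eᶜ, hEm.compl⟩ : {s : Set (Fin d → ℝ) // MeasurableSet s})
  have hdiff : 1 - ε < (gaussMeasure μ₁ S₁ Eᶜ).toReal - (gaussMeasure μ₂ S₂ Eᶜ).toReal := by
    linarith
  have habs2 := le_abs_self
    ((gaussMeasure μ₁ S₁ Eᶜ).toReal - (gaussMeasure μ₂ S₂ Eᶜ).toReal)
  linarith
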